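/- Under the stated hypotheses, if in addition the set {y ∈ D : 0 < τ(y) < 1 and ρ̃(y) ≠ 1} has positive μ-measure, then the inequality is strict: ∫_D g(y)²/ρ(y) dμ(y) < ∫_D g(y)² dμ(y). (Theorem 4.2, strict case, with the equality cases of the pointwise Jensen step made precise.) -/

import Mathlib

open MeasureTheory

set_option maxHeartbeats 1600000 in
/-- Theorem 4.2 (strict case): if additionally the set
`{y | 0 < τ y < 1 and ρ̃ y ≠ 1}` has positive measure, then
`∫ g²/ρ dμ < ∫ g² dμ`. -/
theorem mixture_density_integral_lt
    {D : Type*} [MeasurableSpace D] (μ : Measure D) [IsProbabilityMeasure μ]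
    (g τ ρt ρ : D → ℝ) (I : ℝ)
    (hg : Measurable g) (hg0 : ∀ y, 0 ≤ g y)
    (hI : I = ∫ y, (g y) ^ 2 ∂μ) (hIpos : 0 < I)
    (hg2 : Integrable (fun y => (g y) ^ 2) μ)
    (hτ : Measurable τ) (hτ01 : ∀ y, τ y ∈ Set.Icc (0 : ℝ) 1)
    (hρt : ρt = fun y => (g y) ^ 2 / I)
    (hρ : ρ = fun y => (1 - τ y) + τ y * ρt y)
    (hρ1 : ∫ y, ρ y ∂μ = 1)
    (hρpos : ∀ᵐ y ∂μ, 0 < ρ y)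
    (hstrict : 0 < μ {y | 0 < τ y ∧ τ y < 1 ∧ ρt y ≠ 1}) :
    ∫ y, (g y) ^ 2 / ρ y ∂μ < ∫ y, (g y) ^ 2 ∂μ := by
  -- the majorant
  set f : D → ℝ := fun y => (1 - τ y) * (g y) ^ 2 + τ y * I with hf
  set q : D → ℝ := fun y => (g y) ^ 2 / ρ y with hq
  have hρm : Measurable ρ := by
    rw [hρ, hρt]; measurability
  have hqm : Measurable q := by
    rw [hq]; exact (hg.pow_const 2).div hρm
  -- pointwise inequality where ρ > 0
  have key : ∀ y, 0 < ρ y → q y ≤ f y ∧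
      ((0 < τ y ∧ τ y < 1 ∧ ρt y ≠ 1) → q y < f y) := by
    intro y hy
    have ht0 := (hτ01 y).1
    have ht1 := (hτ01 y).2
    have hρy : ρ y = (1 - τ y) + τ y * ((g y) ^ 2 / I) := by
      rw [hρ, hρt]
    rcases eq_or_lt_of_le (sq_nonneg (g y)) with hA | hA
    · -- g y = 0
      have hq0 : q y = 0 := by simp [hq, ← hA]
      constructor
      · rw [hq0]; simp only [hf, ← hA]
        nlinarith
      · rintro ⟨ht0', _, _⟩
        rw [hq0]; simp only [hf, ← hA]
        nlinarith
    · -- g y ≠ 0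
      have hAI : (g y) ^ 2 / I * I = (g y) ^ 2 := div_mul_cancel₀ _ (ne_of_gt hIpos)
      have hIne : I ≠ 0 := ne_of_gt hIpos
      have hform : (1 - τ y) + τ y * ((g y) ^ 2 / I)
          = ((1 - τ y) * I + τ y * (g y) ^ 2) / I := by
        field_simp
      have hprod : ∀ c : ℝ, 0 ≤ c →
          (g y) ^ 2 * I + c ≤ ((1 - τ y) * (g y) ^ 2 + τ y * I) * ((1 - τ y) * I + τ y * (g y) ^ 2)
          → (g y) ^ 2 ≤ ((1 - τ y) * (g y) ^ 2 + τ y * I) * (((1 - τ y) * I + τ y * (g y) ^ 2) / I) := by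
        intro c hc h
        rw [mul_div_assoc', le_div_iff₀ hIpos]
        linarith
      have hle : q y ≤ f y := by
        rw [hq, div_le_iff₀ hy, hρy, hf]
        simp only
        rw [hform]
        refine hprod 0 le_rfl ?_
        nlinarith [mul_nonneg (mul_nonneg ht0 (by linarith : (0:ℝ) ≤ 1 - τ y)) (sq_nonneg ((g y)^2 - I))]
      refine ⟨hle, ?_⟩
      rintro ⟨ht0', ht1', hne⟩
      have hAne : (g y) ^ 2 ≠ I := by
        intro h
        apply hne
        rw [hρt]; simp only
        rw [h, div_self (ne_of_gt hIpos)]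
      have hpos2 : (0:ℝ) < ((g y) ^ 2 - I) ^ 2 := by
        have h0 : (g y) ^ 2 - I ≠ 0 := sub_ne_zero.mpr hAne
        exact pow_pos (abs_pos.mpr h0) 2 |>.trans_eq (sq_abs _)
      rw [hq, div_lt_iff₀ hy, hρy, hf]
      simp only
      rw [hform]
      have hc : 0 < τ y * (1 - τ y) * ((g y) ^ 2 - I) ^ 2 :=
        mul_pos (mul_pos ht0' (by linarith)) hpos2
      have hlt : (g y) ^ 2 * I < ((1 - τ y) * (g y) ^ 2 + τ y * I) * ((1 - τ y) * I + τ y * (g y) ^ 2) := by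
        nlinarith [hc]
      rw [mul_div_assoc', lt_div_iff₀ hIpos]
      linarith
  have hae_le : ∀ᵐ y ∂μ, q y ≤ f y := by
    filter_upwards [hρpos] with y hy using (key y hy).1
  have hae_q0 : ∀ᵐ y ∂μ, 0 ≤ q y := by
    filter_upwards [hρpos] with y hy
    exact div_nonneg (sq_nonneg _) hy.le
  -- integrability
  have hτg2 : Integrable (fun y => τ y * (g y) ^ 2) μ :=
    hg2.bdd_mul hτ.aestronglyMeasurable
      (c := 1) (Filter.Eventually.of_forall fun y => by rw [Real.norm_eq_abs, abs_le]; exact ⟨by linarith [(hτ01 y).1], (hτ01 y).2⟩)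
  have hτint : Integrable τ μ := by
    refine (integrable_const (1:ℝ)).mono' hτ.aestronglyMeasurable ?_
    filter_upwards with y
    rw [Real.norm_eq_abs, abs_le]
    exact ⟨by linarith [(hτ01 y).1], (hτ01 y).2⟩
  have hτI : Integrable (fun y => τ y * I) μ := hτint.mul_const I
  have hfint : Integrable f μ := by
    have h1 : Integrable (fun y => (1 - τ y) * (g y) ^ 2) μ := by
      have : (fun y => (1 - τ y) * (g y) ^ 2) = fun y => (g y) ^ 2 - τ y * (g y) ^ 2 := by
        funext y; ring
      rw [this]; exact hg2.sub hτg2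
    exact h1.add hτI
  have hqint : Integrable q μ := by
    refine hfint.mono' hqm.aestronglyMeasurable ?_
    filter_upwards [hae_le, hae_q0] with y h1 h2
    rw [Real.norm_eq_abs, abs_of_nonneg h2]; exact h1
  -- compute ∫ f
  have h1τint : Integrable (fun y => 1 - τ y) μ := (integrable_const 1).sub hτint
  have hτρtint : Integrable (fun y => τ y * ((g y) ^ 2 / I)) μ := by
    have : (fun y => τ y * ((g y) ^ 2 / I)) = fun y => (τ y * (g y) ^ 2) / I := by
      funext y; ring
    rw [this]; exact hτg2.div_const I
  have hsplit : ∫ y, (1 - τ y) ∂μ + ∫ y, τ y * ((g y) ^ 2 / I) ∂μ = 1 := by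
    have h0 : ∫ y, ((1 - τ y) + τ y * ((g y) ^ 2 / I)) ∂μ = 1 := by
      have h1 := hρ1
      rw [hρ, hρt] at h1
      exact h1
    rw [integral_add h1τint hτρtint] at h0
    exact h0
  have h1τ : ∫ y, (1 - τ y) ∂μ = 1 - ∫ y, τ y ∂μ := by
    rw [integral_sub (integrable_const 1) hτint, integral_const]
    simp
  have hτg2I : ∫ y, τ y * (g y) ^ 2 ∂μ = I * ∫ y, τ y ∂μ := by
    have h2 : ∫ y, τ y * ((g y) ^ 2 / I) ∂μ = (∫ y, τ y * (g y) ^ 2 ∂μ) / I := by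
      rw [← integral_div]
      congr 1; funext y; ring
    rw [h1τ] at hsplit
    rw [h2] at hsplit
    field_simp at hsplit ⊢
    linarith
  have hfI : ∫ y, f y ∂μ = ∫ y, (g y) ^ 2 ∂μ := by
    have hsubint : Integrable (fun y => (g y) ^ 2 - τ y * (g y) ^ 2) μ := hg2.sub hτg2
    have heq : ∫ y, f y ∂μ = ∫ y, (((g y) ^ 2 - τ y * (g y) ^ 2) + τ y * I) ∂μ :=
      integral_congr_ae (Filter.Eventually.of_forall fun y => by simp only [hf]; ring)
    have hImul : ∫ y, τ y * I ∂μ = (∫ y, τ y ∂μ) * I := integral_mul_const I τ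
    rw [heq, integral_add hsubint hτI, integral_sub hg2 hτg2, hτg2I, hImul]
    ring
  -- strict inequality via positive measure of support of f - q
  have hh0 : ∀ᵐ y ∂μ, 0 ≤ f y - q y := by
    filter_upwards [hae_le] with y h; linarith
  have hhint : Integrable (fun y => f y - q y) μ := hfint.sub hqint
  have hsupp : 0 < μ (Function.support fun y => f y - q y) := by
    set S := {y | 0 < τ y ∧ τ y < 1 ∧ ρt y ≠ 1} with hS
    set T := {y | 0 < ρ y} with hT
    have hTc : μ Tᶜ = 0 := by
      rw [measure_eq_zero_iff_ae_notMem]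
      filter_upwards [hρpos] with y hy
      simp [hT, hy]
    have hsub : S ∩ T ⊆ Function.support fun y => f y - q y := by
      rintro y ⟨hyS, hyT⟩
      have := (key y hyT).2 hyS
      simp only [Function.mem_support]
      intro h; linarith [sub_pos.mpr this, h]
    have hmS : μ S ≤ μ (S ∩ T) := by
      calc μ S ≤ μ (S ∩ T) + μ (S \ T) := measure_le_inter_add_diff μ S T
        _ ≤ μ (S ∩ T) + μ Tᶜ := by
            gcongr
            exact fun y hy => hy.2
        _ = μ (S ∩ T) := by rw [hTc, add_zero]
    calc (0:ENNReal) < μ S := hstrict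
      _ ≤ μ (S ∩ T) := hmS
      _ ≤ _ := measure_mono hsub
  have hpos : 0 < ∫ y, (f y - q y) ∂μ :=
    (integral_pos_iff_support_of_nonneg_ae hh0 hhint).mpr hsupp
  rw [integral_sub hfint hqint, hfI] at hpos
  have : ∫ y, q y ∂μ < ∫ y, (g y) ^ 2 ∂μ := by linarith
  exact this
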